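/- Let S be a generalized Krull domain and J an ideal of S having only finitely many minimal primes over it, all of height at least two. Let A be a subring of S/J over which S/J is integral, and let R be the pullback of the diagram A → S/J ← S (i.e., R = {s ∈ S : s + J ∈ A}). If the extension A ⊆ S/J is apparently fragile, then the only ring T with R ⊆ T ⊆ S such that the inclusion R ⊆ T satisfies going-down is T = R itself. -/

import Mathlib

/-- A ring homomorphism `f : A →+* B` satisfies going-down: whenever `p₁ ⊆ p₂` are primes of `A`
and `Q₂` is a prime of `B` contracting to `p₂`, there is a prime `Q₁ ⊆ Q₂` of `B`
contracting to `p₁`. -/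
def GoingDownHom {A B : Type*} [CommRing A] [CommRing B] (f : A →+* B) : Prop :=
  ∀ (p₁ p₂ : Ideal A), p₁.IsPrime → p₂.IsPrime → p₁ ≤ p₂ →
    ∀ Q₂ : Ideal B, Q₂.IsPrime → Q₂.comap f = p₂ →
      ∃ Q₁ : Ideal B, Q₁.IsPrime ∧ Q₁ ≤ Q₂ ∧ Q₁.comap f = p₁

/-- The canonical map from the localization of a subring `A ⊆ B` at a submonoid `W ⊆ A`
to the localization of `B` at the image of `W` in `B`. -/
noncomputable def locMap {B : Type*} [CommRing B] (A : Subring B) (W : Submonoid A) :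
    Localization W →+* Localization (W.map A.subtype) :=
  IsLocalization.lift (M := W) (S := Localization W)
    (g := (algebraMap B (Localization (W.map A.subtype))).comp A.subtype)
    (fun y => IsLocalization.map_units (M := W.map A.subtype) (Localization (W.map A.subtype))
      ⟨A.subtype y, ⟨y, y.2, rfl⟩⟩)

/-- A subring `A ⊆ B` is perinormal in `B` at the prime `p` of `A`:  the localization `A_p`
(i.e. the image of `Localization.AtPrime p` in `B_{A∖p}`) is the only local ring `T` between
`A_p` and `B_{A∖p}` whose maximal ideal contracts to `pA_p` and which satisfies going-down
over `A_p`. -/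
def PeriAt {B : Type*} [CommRing B] (A : Subring B) (p : Ideal A) (hp : p.IsPrime) : Prop :=
  haveI := hp
  ∀ (T : Subring (Localization (p.primeCompl.map A.subtype)))
    (hT : (locMap A p.primeCompl).range ≤ T),
    IsLocalRing T →
    (∀ M : Ideal T, M.IsMaximal →
      M.comap ((locMap A p.primeCompl).codRestrict T (fun x => hT ⟨x, rfl⟩)) =
        IsLocalRing.maximalIdeal (Localization.AtPrime p)) →
    GoingDownHom ((locMap A p.primeCompl).codRestrict T (fun x => hT ⟨x, rfl⟩)) →
    T = (locMap A p.primeCompl).range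

/-- A subring `A` of `B` is perinormal in `B`. -/
def PerinormalIn {B : Type*} [CommRing B] (A : Subring B) : Prop :=
  ∀ (p : Ideal A) (hp : p.IsPrime), PeriAt A p hp

/-- An integral domain `R` is perinormal:  every local overring of `R`
(local ring between `R` and its fraction field) satisfying going-down over `R`
is a localization of `R` at a prime ideal. -/
def PerinormalDomain (R : Type*) [CommRing R] [IsDomain R] : Prop :=
  ∀ (T : Subring (FractionRing R)) (hT : (algebraMap R (FractionRing R)).range ≤ T),
    IsLocalRing T →
    GoingDownHom ((algebraMap R (FractionRing R)).codRestrict T (fun x => hT ⟨x, rfl⟩)) →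
    ∃ p : Ideal R, p.IsPrime ∧
      (T : Set (FractionRing R)) =
        {x | ∃ r s : R, s ∉ p ∧
          x * algebraMap R (FractionRing R) s = algebraMap R (FractionRing R) r}

/-- A subring `A ⊆ B` is apparently fragile in `B`: for every ring `C` with `A ⊊ C ⊆ B`
there are a minimal prime `p` of `A` and distinct primes `P, Q` of `C` contracting to `p`. -/
def ApparentlyFragile {B : Type*} [CommRing B] (A : Subring B) : Prop :=
  ∀ (C : Subring B) (hAC : A ≤ C), A ≠ C →
    ∃ p ∈ minimalPrimes A, ∃ P Q : Ideal C, P.IsPrime ∧ Q.IsPrime ∧ P ≠ Q ∧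
      P.comap (Subring.inclusion hAC) = p ∧ Q.comap (Subring.inclusion hAC) = p

/-- A subring `A ⊆ B` is fragile in `B`: for every prime `P` of `A`, the extension
`A_P ⊆ B_{A∖P}` is apparently fragile. -/
def Fragile {B : Type*} [CommRing B] (A : Subring B) : Prop :=
  ∀ (P : Ideal A) (hP : P.IsPrime),
    haveI := hP
    ApparentlyFragile (locMap A P.primeCompl).range

/-- A subring `A ⊆ B` is globally fragile in `B`: for every multiplicative subset `W` of `A`,
the extension `A_W ⊆ B_W` is apparently fragile. -/
def GloballyFragile {B : Type*} [CommRing B] (A : Subring B) : Prop :=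
  ∀ W : Submonoid A, ApparentlyFragile (locMap A W).range

/-- An integral domain `S` is a generalized Krull domain: (i) `S` is the intersection of its
localizations at height-one primes (inside its fraction field), (ii) every nonzero element lies
in only finitely many height-one primes, and (iii) the localization at every height-one prime
is a valuation ring. -/
def IsGenKrull (S : Type*) [CommRing S] [IsDomain S] : Prop :=
  (∀ x : FractionRing S,
      (∀ (p : Ideal S) (hp : p.IsPrime), Order.height (⟨p, hp⟩ : PrimeSpectrum S) = 1 →
        ∃ a s : S, s ∉ p ∧ x * algebraMap S (FractionRing S) s = algebraMap S (FractionRing S) a) →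
      ∃ r : S, algebraMap S (FractionRing S) r = x) ∧
  (∀ s : S, s ≠ 0 →
      {p : Ideal S | ∃ hp : p.IsPrime, Order.height (⟨p, hp⟩ : PrimeSpectrum S) = 1 ∧ s ∈ p}.Finite) ∧
  (∀ (p : Ideal S) (hp : p.IsPrime), Order.height (⟨p, hp⟩ : PrimeSpectrum S) = 1 →
      haveI := hp
      ValuationRing (Localization.AtPrime p))

/-- A prime ideal `Q` has height one. -/
def HeightOne {S : Type*} [CommRing S] (Q : Ideal S) : Prop :=
  ∃ hQ : Q.IsPrime, Order.height (⟨Q, hQ⟩ : PrimeSpectrum S) = 1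


section Aux
variable {S : Type*} [CommRing S] [IsDomain S]

lemma heightOne_eq {p c : Ideal S} (hp : p.IsPrime)
    (h1 : Order.height (⟨p, hp⟩ : PrimeSpectrum S) = 1) (hc : c.IsPrime)
    (hle : c ≤ p) (hc0 : c ≠ ⊥) : c = p := by
  by_contra hne
  have hlt : (⟨c, hc⟩ : PrimeSpectrum S) < ⟨p, hp⟩ := by
    rw [← PrimeSpectrum.asIdeal_lt_asIdeal]
    exact lt_of_le_of_ne hle hne
  have hbot : (⟨⊥, Ideal.bot_prime⟩ : PrimeSpectrum S) < ⟨c, hc⟩ := by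
    rw [← PrimeSpectrum.asIdeal_lt_asIdeal]
    exact lt_of_le_of_ne bot_le (Ne.symm hc0)
  have h2 : Order.height (⟨c, hc⟩ : PrimeSpectrum S) < 1 :=
    (Order.height_le_coe_iff (x := (⟨p, hp⟩ : PrimeSpectrum S)) (n := 1)).mp (by
      exact_mod_cast h1.le) _ hlt
  have h3 : Order.height (⟨c, hc⟩ : PrimeSpectrum S) = 0 := ENat.lt_one_iff_eq_zero.mp h2
  exact (Order.height_eq_zero.mp h3).not_lt hbot

/-- For a height-one prime `p`, `u ∈ p` nonzero, `x ∈ p`:  some power of `x`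
falls into `(u)` up to a denominator outside `p`. -/
lemma local_power_step {p : Ideal S} (hp : p.IsPrime)
    (h1 : Order.height (⟨p, hp⟩ : PrimeSpectrum S) = 1) {u x : S}
    (hu0 : u ≠ 0) (hup : u ∈ p) (hx : x ∈ p) :
    ∃ (k : ℕ) (s a : S), s ∉ p ∧ s * x ^ k = u * a := by
  haveI := hp
  set L := Localization.AtPrime p with hL
  set θ := algebraMap S L with hθ
  have hinj : Function.Injective θ :=
    IsLocalization.injective L p.primeCompl_le_nonZeroDivisors
  have hrad : θ x ∈ (Ideal.span {θ u}).radical := by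
    rw [Ideal.radical_eq_sInf, Submodule.mem_sInf]
    rintro 𝔮 ⟨hle𝔮, hpr⟩
    haveI := hpr
    -- contraction of 𝔮
    set c := Ideal.comap θ 𝔮 with hc
    haveI hcp : c.IsPrime := Ideal.IsPrime.comap θ
    have hcle : c ≤ p := by
      intro y hy
      by_contra hyp
      have hunit : IsUnit (θ y) := IsLocalization.map_units L (⟨y, hyp⟩ : p.primeCompl)
      exact hpr.ne_top (Ideal.eq_top_of_isUnit_mem _ hy hunit)
    have huc : u ∈ c := hle𝔮 (Ideal.subset_span rfl)
    have hc0 : c ≠ ⊥ := fun h => hu0 (by simpa [h] using huc)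
    have := heightOne_eq hp h1 hcp hcle hc0
    show x ∈ c
    rw [this]; exact hx
  obtain ⟨k, hk⟩ := Ideal.mem_radical_iff.mp hrad
  obtain ⟨l, hl⟩ := Ideal.mem_span_singleton'.mp hk
  obtain ⟨⟨a, s⟩, hmk⟩ := IsLocalization.mk'_surjective p.primeCompl l
  have hspec : l * θ s = θ a := by
    rw [← hmk]; exact IsLocalization.mk'_spec L a s
  have : θ (s * x ^ k) = θ (u * a) := by
    push_cast [map_mul, map_pow]
    calc θ s * θ x ^ k = θ u * (l * θ s) := by rw [← hl]; ring
    _ = θ u * θ a := by rw [hspec]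
  exact ⟨k, s, a, s.2, by exact_mod_cast hinj this⟩

/-- Principal ideal theorem in a generalized Krull domain (only uses axioms (i) and (ii)):
every minimal prime of a nonzero principal ideal has height one. -/
lemma pit
    (h1 : ∀ x : FractionRing S,
      (∀ (p : Ideal S) (hp : p.IsPrime), Order.height (⟨p, hp⟩ : PrimeSpectrum S) = 1 →
        ∃ a s : S, s ∉ p ∧ x * algebraMap S (FractionRing S) s = algebraMap S (FractionRing S) a) →
      ∃ r : S, algebraMap S (FractionRing S) r = x)
    (h2 : ∀ s : S, s ≠ 0 →
      {p : Ideal S | ∃ hp : p.IsPrime, Order.height (⟨p, hp⟩ : PrimeSpectrum S) = 1 ∧ s ∈ p}.Finite)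
    {u : S} (hu0 : u ≠ 0) {q : Ideal S} (hq : q ∈ (Ideal.span {u}).minimalPrimes) :
    ∃ hqp : q.IsPrime, Order.height (⟨q, hqp⟩ : PrimeSpectrum S) = 1 := by
  have hqp : q.IsPrime := hq.1.1
  have hspanq : Ideal.span {u} ≤ q := hq.1.2
  set Sig0 := {p : Ideal S | ∃ hp : p.IsPrime, Order.height (⟨p, hp⟩ : PrimeSpectrum S) = 1 ∧ u ∈ p}
    with hSig0
  have hSigfin : Sig0.Finite := h2 u hu0
  set F := hSigfin.toFinset with hF
  -- main claim: some member of Sig0 is contained in q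
  have hex : ∃ p ∈ Sig0, p ≤ q := by
    by_contra hcon
    push_neg at hcon
    have hch : ∀ p : {x // x ∈ F}, ∃ y, y ∈ (p : Ideal S) ∧ y ∉ q := by
      rintro ⟨p, hpF⟩
      exact SetLike.not_le_iff_exists.mp (hcon p (hSigfin.mem_toFinset.mp hpF))
    choose xf hxf1 hxf2 using hch
    set x : S := ∏ p ∈ F.attach, xf p with hx
    have hxq : x ∉ q := by
      intro hmem
      obtain ⟨p, hpF, hp⟩ := (hqp.prod_mem_iff).mp hmem
      exact hxf2 p hp
    have hxp : ∀ p (hpF : p ∈ F), x ∈ p := by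
      intro p hpF
      have : xf ⟨p, hpF⟩ ∣ x := Finset.dvd_prod_of_mem _ (Finset.mem_attach _ _)
      obtain ⟨c, hc⟩ := this
      have hp' : p.IsPrime := (hSigfin.mem_toFinset.mp hpF).1
      rw [hc]
      exact Ideal.mul_mem_right _ _ (hxf1 ⟨p, hpF⟩)
    -- per-prime data
    have hD : ∀ p : {x // x ∈ F}, ∃ (k : ℕ) (s a : S), s ∉ (p : Ideal S) ∧ s * x ^ k = u * a := by
      rintro ⟨p, hpF⟩
      obtain ⟨hp, hht1, hup⟩ := hSigfin.mem_toFinset.mp hpF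
      exact local_power_step hp hht1 hu0 hup (hxp p hpF)
    choose kf sf af hsf heqf using hD
    set k : ℕ := F.attach.sup kf with hk
    set ι := algebraMap S (FractionRing S) with hι
    have hιinj : Function.Injective ι := IsFractionRing.injective S (FractionRing S)
    have hιu : ι u ≠ 0 := fun h => hu0 (hιinj (by simpa using h))
    set ξ : FractionRing S := ι (x ^ k) / ι u with hξ
    obtain ⟨r, hr⟩ := h1 ξ (by
      intro p hp hht1
      by_cases hup : u ∈ p
      · have hpSig : p ∈ Sig0 := ⟨hp, hht1, hup⟩
        have hpF : p ∈ F := hSigfin.mem_toFinset.mpr hpSig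
        set P : {x // x ∈ F} := ⟨p, hpF⟩ with hP
        refine ⟨x ^ (k - kf P) * af P, sf P, hsf P, ?_⟩
        have hkle : kf P ≤ k := Finset.le_sup (Finset.mem_attach _ _)
        have hxksplit : x ^ k = x ^ (k - kf P) * x ^ kf P := by
          rw [← pow_add, Nat.sub_add_cancel hkle]
        have key : x ^ k * sf P = u * (x ^ (k - kf P) * af P) := by
          rw [hxksplit]
          calc x ^ (k - kf P) * x ^ kf P * sf P
              = x ^ (k - kf P) * (sf P * x ^ kf P) := by ring
            _ = x ^ (k - kf P) * (u * af P) := by rw [heqf P]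
            _ = u * (x ^ (k - kf P) * af P) := by ring
        rw [hξ, div_mul_eq_mul_div, div_eq_iff hιu, ← map_mul, ← map_mul, key, mul_comm]
      · refine ⟨x ^ k, u, hup, ?_⟩
        rw [hξ, div_mul_cancel₀ _ hιu])
    have : ι (u * r) = ι (x ^ k) := by
      rw [map_mul, hr, hξ, mul_div_cancel₀ _ hιu]
    have hpow : x ^ k ∈ Ideal.span {u} := by
      rw [Ideal.mem_span_singleton']
      exact ⟨r, by rw [mul_comm]; exact hιinj this⟩
    exact hxq (hqp.mem_of_pow_mem k (hspanq hpow))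
  obtain ⟨p, hpSig, hple⟩ := hex
  obtain ⟨hp, hht1, hup⟩ := hpSig
  have : q ≤ p := hq.2 ⟨hp, Ideal.span_le.mpr (Set.singleton_subset_iff.mpr hup)⟩ hple
  have hqe : q = p := le_antisymm this hple
  subst hqe
  exact ⟨hp, hht1⟩

/-- Key contradiction. -/
lemma key_contradiction
    (h1 : ∀ x : FractionRing S,
      (∀ (p : Ideal S) (hp : p.IsPrime), Order.height (⟨p, hp⟩ : PrimeSpectrum S) = 1 →
        ∃ a s : S, s ∉ p ∧ x * algebraMap S (FractionRing S) s = algebraMap S (FractionRing S) a) →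
      ∃ r : S, algebraMap S (FractionRing S) r = x)
    (h2 : ∀ s : S, s ≠ 0 →
      {p : Ideal S | ∃ hp : p.IsPrime, Order.height (⟨p, hp⟩ : PrimeSpectrum S) = 1 ∧ s ∈ p}.Finite)
    (J : Ideal S)
    (hht : ∀ q, ∀ hq : q ∈ J.minimalPrimes,
      2 ≤ Order.height (⟨q, hq.1.1⟩ : PrimeSpectrum S))
    {R T : Subring S} (hRT : R ≤ T) (hJR : ∀ x ∈ J, x ∈ R)
    (hGD : GoingDownHom (Subring.inclusion hRT))
    (hLO : ∀ P : Ideal T, P.IsPrime → ∃ Ps : Ideal S, Ps.IsPrime ∧ Ideal.comap T.subtype Ps = P)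
    {P Q : Ideal T} (hP : P.IsPrime) (hQ : Q.IsPrime)
    (hPQ : Ideal.comap (Subring.inclusion hRT) P = Ideal.comap (Subring.inclusion hRT) Q)
    {u : T} (huP : u ∈ P) (huQ : u ∉ Q) : False := by
  have hu0 : (u : S) ≠ 0 := by
    intro h
    exact huQ (by rw [show u = 0 from Subtype.ext h]; exact Q.zero_mem)
  obtain ⟨Ps, hPs, hPsc⟩ := hLO P hP
  haveI := hPs
  have huPs : (u : S) ∈ Ps := by
    rw [← hPsc] at huP; exact huP
  have hspan : Ideal.span {(u : S)} ≤ Ps :=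
    Ideal.span_le.mpr (Set.singleton_subset_iff.mpr huPs)
  obtain ⟨q₁, hq₁min, hq₁le⟩ := Ideal.exists_minimalPrimes_le hspan
  obtain ⟨hq₁p, hq₁ht⟩ := pit h1 h2 hu0 hq₁min
  have huq₁ : (u : S) ∈ q₁ := hq₁min.1.2 (Ideal.subset_span rfl)
  haveI := hq₁p
  have hJq₁ : ¬ J ≤ q₁ := by
    intro hle
    obtain ⟨qm, hqm, hqmle⟩ := Ideal.exists_minimalPrimes_le hle
    have h2le := hht qm hqm
    have hmono : Order.height (⟨qm, hqm.1.1⟩ : PrimeSpectrum S) ≤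
        Order.height (⟨q₁, hq₁p⟩ : PrimeSpectrum S) :=
      Order.height_mono ((PrimeSpectrum.asIdeal_le_asIdeal
        ⟨qm, hqm.1.1⟩ ⟨q₁, hq₁p⟩).mp hqmle)
    rw [hq₁ht] at hmono
    have : (2 : ℕ∞) ≤ 1 := le_trans h2le hmono
    norm_num at this
  obtain ⟨t₀, ht₀J, ht₀q₁⟩ := SetLike.not_le_iff_exists.mp hJq₁
  -- the contraction of q₁ to R
  set r : Ideal R := Ideal.comap (Subring.inclusion hRT) (Ideal.comap T.subtype q₁) with hr
  haveI hq₁T : (Ideal.comap T.subtype q₁).IsPrime := Ideal.IsPrime.comap _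
  haveI hrp : r.IsPrime := Ideal.IsPrime.comap _
  have hrle : r ≤ Ideal.comap (Subring.inclusion hRT) Q := by
    rw [← hPQ]
    intro x hx
    have hxq₁ : (x : S) ∈ q₁ := hx
    show Subring.inclusion hRT x ∈ P
    rw [← hPsc]
    exact hq₁le hxq₁
  obtain ⟨Q₁, hQ₁p, hQ₁le, hQ₁c⟩ := hGD r (Ideal.comap (Subring.inclusion hRT) Q)
    hrp (Ideal.IsPrime.comap _) hrle Q hQ rfl
  have ht₀R : t₀ ∈ R := hJR t₀ ht₀J
  have ht₀T : t₀ ∈ T := hRT ht₀R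
  set τ : T := ⟨t₀, ht₀T⟩ with hτ
  have hτQ₁ : τ ∉ Q₁ := by
    intro h
    have hmem : (⟨t₀, ht₀R⟩ : R) ∈ Ideal.comap (Subring.inclusion hRT) Q₁ := h
    rw [hQ₁c] at hmem
    exact ht₀q₁ hmem
  have hwprod : τ * u ∈ Q₁ := by
    have hwJ : t₀ * (u : S) ∈ J := J.mul_mem_right _ ht₀J
    have hwq₁ : t₀ * (u : S) ∈ q₁ := q₁.mul_mem_left _ huq₁
    have hmem : (⟨t₀ * (u : S), hJR _ hwJ⟩ : R) ∈ r := hwq₁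
    rw [← hQ₁c] at hmem
    have heq : Subring.inclusion hRT (⟨t₀ * (u : S), hJR _ hwJ⟩ : R) = τ * u :=
      Subtype.ext rfl
    rw [Ideal.mem_comap, heq] at hmem
    exact hmem
  exact huQ (hQ₁le ((hQ₁p.mem_or_mem hwprod).resolve_left hτQ₁))

/-- If `S/J` is integral over the subring `A` and `R` is the pullback, then `S` is
integral over `R`. -/
lemma isIntegral_pullback {S : Type*} [CommRing S] (J : Ideal S) (A : Subring (S ⧸ J))
    (hint : Algebra.IsIntegral A (S ⧸ J)) (R : Subring S)
    (hR : R = A.comap (Ideal.Quotient.mk J)) (hJtop : J ≠ ⊤) :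
    Algebra.IsIntegral R S := by
  haveI hnt : Nontrivial (S ⧸ J) := Ideal.Quotient.nontrivial_iff.mpr hJtop
  haveI hntA : Nontrivial A := ⟨⟨0, 1, fun h => by
    have : ((0 : A) : S ⧸ J) = ((1 : A) : S ⧸ J) := congrArg _ h
    simpa using this⟩⟩
  have hmemR : ∀ x : S, x ∈ R ↔ Ideal.Quotient.mk J x ∈ A := by
    intro x; rw [hR]; exact Iff.rfl
  set ρ : R →+* A := RingHom.codRestrict ((Ideal.Quotient.mk J).comp R.subtype) A
    (fun x => (hmemR x.1).mp x.2) with hρ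
  have hρsurj : Function.Surjective ρ := by
    rintro ⟨a, ha⟩
    obtain ⟨s, hs⟩ := Ideal.Quotient.mk_surjective a
    exact ⟨⟨s, (hmemR s).mpr (hs ▸ ha)⟩, Subtype.ext hs⟩
  constructor
  intro s
  obtain ⟨f, hfm, hfev⟩ := (Algebra.IsIntegral.isIntegral (R := A) (Ideal.Quotient.mk J s) :
    IsIntegral A (Ideal.Quotient.mk J s))
  have hlift : f ∈ Polynomial.lifts ρ :=
    (Polynomial.lifts_iff_coeff_lifts f).mpr (fun n => hρsurj.range_eq ▸ Set.mem_univ _)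
  obtain ⟨q, hqmap, hqdeg, hqm⟩ := Polynomial.lifts_and_degree_eq_and_monic hlift hfm
  -- the evaluation of the lifted polynomial lands in J
  set e : S := Polynomial.eval₂ R.subtype s q with he
  have hcomp : (Ideal.Quotient.mk J).comp R.subtype = A.subtype.comp ρ := by
    ext x; rfl
  have halg : (algebraMap A (S ⧸ J)) = A.subtype := rfl
  have heJ : Ideal.Quotient.mk J e = 0 := by
    rw [he, Polynomial.hom_eval₂, hcomp, ← Polynomial.eval₂_map, hqmap]
    rw [halg] at hfev
    exact hfev
  have heR : e ∈ R := (hmemR e).mpr (by rw [heJ]; exact A.zero_mem)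
  have hfdeg : f.natDegree ≠ 0 := by
    intro h0
    rw [Polynomial.Monic.natDegree_eq_zero hfm] at h0
    rw [h0] at hfev
    simpa using hfev
  have hqdegpos : 0 < q.degree := by
    rw [hqdeg]
    exact Polynomial.natDegree_pos_iff_degree_pos.mp (Nat.pos_of_ne_zero hfdeg)
  refine ⟨q - Polynomial.C ⟨e, heR⟩, hqm.sub_of_left ?_, ?_⟩
  · exact lt_of_le_of_lt (Polynomial.degree_C_le) hqdegpos
  · show Polynomial.eval₂ (algebraMap R S) s _ = 0
    have : (algebraMap (↥R) S) = R.subtype := rfl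
    rw [this, Polynomial.eval₂_sub, Polynomial.eval₂_C]
    show e - e = 0
    exact sub_self e

end Aux

/-- Let `S` be a generalized Krull domain and `J` an ideal with finitely
many minimal primes, all of height at least two.  Let `A` be a subring of `S/J` over which
`S/J` is integral, and `R` the pullback of `A → S/J ← S`.  If `A ⊆ S/J` is apparently fragile,
then the only ring between `R` and `S` satisfying going-down over `R` is `R` itself. -/
theorem no_goingDown_intermediate_of_apparentlyFragile {S : Type*} [CommRing S] [IsDomain S]
    (hS : IsGenKrull S) (J : Ideal S) (hfin : J.minimalPrimes.Finite)
    (hht : ∀ q, ∀ hq : q ∈ J.minimalPrimes,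
      2 ≤ Order.height (⟨q, hq.1.1⟩ : PrimeSpectrum S))
    (A : Subring (S ⧸ J)) (hint : Algebra.IsIntegral A (S ⧸ J))
    (hfrag : ApparentlyFragile A)
    (R : Subring S) (hR : R = A.comap (Ideal.Quotient.mk J)) :
    ∀ (T : Subring S) (hRT : R ≤ T), GoingDownHom (Subring.inclusion hRT) → T = R := by
  intro T hRT hGD
  have hmemR : ∀ x : S, x ∈ R ↔ Ideal.Quotient.mk J x ∈ A := by
    intro x; rw [hR]; exact Iff.rfl
  by_cases hJtop : J = ⊤
  · -- degenerate case: the quotient is trivial and `R = S`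
    haveI : Subsingleton (S ⧸ J) := by
      rw [hJtop]
      exact Ideal.Quotient.subsingleton_iff.mpr rfl
    have hRall : ∀ x : S, x ∈ R := fun x =>
      (hmemR x).mpr (by rw [Subsingleton.elim (Ideal.Quotient.mk J x) 0]; exact A.zero_mem)
    exact le_antisymm (fun x _ => hRall x) hRT
  obtain ⟨h1, h2, -⟩ := hS
  have hJR : ∀ x ∈ J, x ∈ R := fun x hx =>
    (hmemR x).mpr (by rw [Ideal.Quotient.eq_zero_iff_mem.mpr hx]; exact A.zero_mem)
  refine le_antisymm ?_ hRT
  by_contra hTR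
  obtain ⟨t, htT, htR⟩ := SetLike.not_le_iff_exists.mp hTR
  -- the image of `T` in `S ⧸ J`
  set C : Subring (S ⧸ J) := T.map (Ideal.Quotient.mk J) with hC
  have hAC : A ≤ C := by
    intro a ha
    obtain ⟨s, hs⟩ := Ideal.Quotient.mk_surjective a
    exact ⟨s, hRT ((hmemR s).mpr (hs ▸ ha)), hs⟩
  have hAne : A ≠ C := by
    intro h
    exact htR ((hmemR t).mpr (h ▸ (⟨t, htT, rfl⟩ : Ideal.Quotient.mk J t ∈ C)))
  obtain ⟨p, hpmin, Pb, Qb, hPb, hQb, hPQb, hPbc, hQbc⟩ := hfrag C hAC hAne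
  -- the quotient map from `T` onto `C`
  set φ : T →+* C := RingHom.codRestrict ((Ideal.Quotient.mk J).comp T.subtype) C
    (fun x => ⟨x.1, x.2, rfl⟩) with hφ
  have hφsurj : Function.Surjective φ := by
    rintro ⟨c, tc, htc, hc⟩
    exact ⟨⟨tc, htc⟩, Subtype.ext hc⟩
  set P : Ideal T := Ideal.comap φ Pb with hP
  set Q : Ideal T := Ideal.comap φ Qb with hQ
  haveI := hPb; haveI := hQb
  haveI hPp : P.IsPrime := Ideal.IsPrime.comap φ
  haveI hQp : Q.IsPrime := Ideal.IsPrime.comap φ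
  have hPQ : P ≠ Q := fun h => hPQb (Ideal.comap_injective_of_surjective φ hφsurj h)
  -- equal contractions to R
  have hcc : Ideal.comap (Subring.inclusion hRT) P = Ideal.comap (Subring.inclusion hRT) Q := by
    ext x
    have hxA : Ideal.Quotient.mk J x.1 ∈ A := (hmemR x.1).mp x.2
    have heqa : (Subring.inclusion hAC) (⟨Ideal.Quotient.mk J x.1, hxA⟩ : A) =
        φ (Subring.inclusion hRT x) := Subtype.ext rfl
    constructor
    · intro hx
      have : (⟨Ideal.Quotient.mk J x.1, hxA⟩ : A) ∈ Ideal.comap (Subring.inclusion hAC) Pb := by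
        rw [Ideal.mem_comap, heqa]; exact hx
      rw [hPbc, ← hQbc] at this
      rw [Ideal.mem_comap, heqa] at this
      exact this
    · intro hx
      have : (⟨Ideal.Quotient.mk J x.1, hxA⟩ : A) ∈ Ideal.comap (Subring.inclusion hAC) Qb := by
        rw [Ideal.mem_comap, heqa]; exact hx
      rw [hQbc, ← hPbc] at this
      rw [Ideal.mem_comap, heqa] at this
      exact this
  -- S is integral over T, giving lying over
  haveI hRS : Algebra.IsIntegral R S := isIntegral_pullback J A hint R hR hJtop
  letI : Algebra R T := (Subring.inclusion hRT).toAlgebra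
  haveI : IsScalarTower R T S := IsScalarTower.of_algebraMap_eq (fun x => rfl)
  haveI hTS : Algebra.IsIntegral T S :=
    ⟨fun s => IsIntegral.tower_top (A := T) (hRS.isIntegral s)⟩
  have hLO : ∀ P' : Ideal T, P'.IsPrime →
      ∃ Ps : Ideal S, Ps.IsPrime ∧ Ideal.comap T.subtype Ps = P' := by
    intro P' hP'
    haveI := hP'
    obtain ⟨Ps, -, hPs, hPsc⟩ := Ideal.exists_ideal_over_prime_of_isIntegral P' (⊥ : Ideal S)
      (fun x hx => by
        have hx0 : x = 0 := Subtype.ext (by exact hx)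
        rw [hx0]; exact P'.zero_mem)
    exact ⟨Ps, hPs, hPsc⟩
  -- P ≠ Q: pick an element separating them and derive the contradiction
  rcases SetLike.not_le_iff_exists.mp (fun h : P ≤ Q =>
      hPQ (le_antisymm h (by
        by_contra hQP
        obtain ⟨v, hvQ, hvP⟩ := SetLike.not_le_iff_exists.mp hQP
        exact key_contradiction h1 h2 J hht hRT hJR hGD hLO hQp hPp hcc.symm hvQ hvP))) with
    ⟨u, huP, huQ⟩
  exact key_contradiction h1 h2 J hht hRT hJR hGD hLO hPp hQp hcc huP huQ
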